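/- Let K = ℚ(i), so O_K = ℤ[i]. For M ∈ SL₂(ℤ[i]), the Möbius image M(ℝ̂) equals ℝ̂ = ℝ ∪ {∞} (as subsets of ℂ ∪ {∞}) if and only if either all four entries of M lie in ℤ, or all four entries of M lie in iℤ. -/

import Mathlib

open Complex ComplexConjugate NumberField OnePoint

/-- The finite part of the Möbius image of the extended real line `ℝ̂` under the matrix
`[[α,γ],[β,δ]]`: the set `{(αx+γ)/(βx+δ) : x ∈ ℝ, βx+δ ≠ 0} ∪ {α/β if β ≠ 0}`. -/
def mobiusFin (α β γ δ : ℂ) : Set ℂ :=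
  {z | (∃ x : ℝ, β * (x : ℂ) + δ ≠ 0 ∧ z = (α * x + γ) / (β * x + δ)) ∨ (β ≠ 0 ∧ z = α / β)}

/-- The Möbius image of `ℝ̂ = ℝ ∪ {∞}` in `ℂ ∪ {∞}` under the matrix `[[α,γ],[β,δ]]`;
`∞` belongs to it iff `β = 0` or `δ/β ∈ ℝ`. -/
def mobius (α β γ δ : ℂ) : Set (OnePoint ℂ) :=
  {w | (∃ z ∈ mobiusFin α β γ δ, w = (z : OnePoint ℂ)) ∨
       ((β = 0 ∨ ∃ x : ℝ, δ = β * (x : ℂ)) ∧ w = ∞)}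

/-- The extended real line `ℝ̂ = ℝ ∪ {∞}` as a subset of `ℂ ∪ {∞}`. -/
def rhat : Set (OnePoint ℂ) :=
  {w | (∃ x : ℝ, w = ((x : ℂ) : OnePoint ℂ)) ∨ w = ∞}

/-- The embedding of the ring of integers of `K` into `ℂ` induced by `ι : K →+* ℂ`. -/
noncomputable def emb (K : Type) [Field K] [NumberField K] (ι : K →+* ℂ)
    (x : RingOfIntegers K) : ℂ := ι (algebraMap (RingOfIntegers K) K x)

/-- The `K`-Bianchi circle attached to `M ∈ SL₂(O_K)`: the Möbius image `M(ℝ̂) ⊆ ℂ ∪ {∞}`. -/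
noncomputable def bianchiCircle (K : Type) [Field K] [NumberField K] (ι : K →+* ℂ)
    (M : Matrix.SpecialLinearGroup (Fin 2) (RingOfIntegers K)) : Set (OnePoint ℂ) :=
  mobius (emb K ι (M.1 0 0)) (emb K ι (M.1 1 0)) (emb K ι (M.1 0 1)) (emb K ι (M.1 1 1))

/-! ### Auxiliary lemmas -/

lemma mobiusFin_scale (l α β γ δ : ℂ) (hl : l ≠ 0) :
    mobiusFin (l*α) (l*β) (l*γ) (l*δ) = mobiusFin α β γ δ := by
  ext z
  simp only [mobiusFin, Set.mem_setOf_eq]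
  have h1 : ∀ x : ℝ, l*β*(x:ℂ) + l*δ = l*(β*x+δ) := by intro x; ring
  constructor
  · rintro (⟨x, hx, hz⟩ | ⟨hb, hz⟩)
    · refine Or.inl ⟨x, ?_, ?_⟩
      · intro h; rw [h1] at hx; exact hx (by rw [h, mul_zero])
      · rw [hz, h1]; rw [show l*α*(x:ℂ) + l*γ = l*(α*x+γ) by ring]
        rw [mul_div_mul_left _ _ hl]
    · exact Or.inr ⟨by simpa [hl] using hb, by rw [hz, mul_div_mul_left _ _ hl]⟩
  · rintro (⟨x, hx, hz⟩ | ⟨hb, hz⟩)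
    · refine Or.inl ⟨x, ?_, ?_⟩
      · rw [h1]; exact mul_ne_zero hl hx
      · rw [hz, h1, show l*α*(x:ℂ) + l*γ = l*(α*x+γ) by ring, mul_div_mul_left _ _ hl]
    · exact Or.inr ⟨mul_ne_zero hl hb, by rw [hz, mul_div_mul_left _ _ hl]⟩

lemma mobius_scale (l α β γ δ : ℂ) (hl : l ≠ 0) :
    mobius (l*α) (l*β) (l*γ) (l*δ) = mobius α β γ δ := by
  ext w
  simp only [mobius, Set.mem_setOf_eq, mobiusFin_scale l α β γ δ hl]
  constructor
  · rintro (h | ⟨(hb | ⟨x, hx⟩), hw⟩)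
    · exact Or.inl h
    · exact Or.inr ⟨Or.inl (by simpa [hl] using hb), hw⟩
    · refine Or.inr ⟨Or.inr ⟨x, ?_⟩, hw⟩
      have := hx; rw [mul_assoc] at this
      exact mul_left_cancel₀ hl this
  · rintro (h | ⟨(hb | ⟨x, hx⟩), hw⟩)
    · exact Or.inl h
    · exact Or.inr ⟨Or.inl (by rw [hb, mul_zero]), hw⟩
    · exact Or.inr ⟨Or.inr ⟨x, by rw [hx]; ring⟩, hw⟩

lemma mobius_real (a b c d : ℝ) (hdet : a*d - c*b ≠ 0) :
    mobius (a:ℂ) b c d = rhat := by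
  ext w
  simp only [mobius, mobiusFin, rhat, Set.mem_setOf_eq]
  constructor
  · rintro (⟨z, (⟨x, hx, hz⟩ | ⟨hb, hz⟩), hw⟩ | ⟨_, hw⟩)
    · refine Or.inl ⟨(a*x+c)/(b*x+d), ?_⟩
      rw [hw, hz]; norm_cast
    · refine Or.inl ⟨a/b, ?_⟩
      rw [hw, hz]; norm_cast
    · exact Or.inr hw
  · rintro (⟨y, hw⟩ | hw)
    · by_cases h1 : a - b*y = 0
      · have hb : b ≠ 0 := by
          intro hb0
          apply hdet
          have ha : a = 0 := by rw [hb0] at h1; linarith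
          rw [ha, hb0]; ring
        refine Or.inl ⟨(y:ℂ), Or.inr ⟨by exact_mod_cast hb, ?_⟩, hw⟩
        have : y = a / b := by field_simp; linarith [h1]
        rw [this]; norm_cast
      · set x : ℝ := (d*y - c)/(a - b*y) with hxdef
        have hden : (b*x + d) * (a - b*y) = a*d - c*b := by
          rw [hxdef]; field_simp; ring
        have hden' : b*x + d ≠ 0 := by
          intro h0; rw [h0, zero_mul] at hden; exact hdet hden.symm
        refine Or.inl ⟨(y:ℝ), Or.inl ⟨x, ?_, ?_⟩, hw⟩
        · exact_mod_cast hden'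
        · have hval : (a*x + c) = y * (b*x + d) := by
            have h2 : (a*x + c) * (a - b*y) = (y * (b*x + d)) * (a - b*y) := by
              have e : x*(a-b*y) = d*y-c := by rw [hxdef]; exact div_mul_cancel₀ _ h1
              linear_combination (a - y*b) * e
            exact mul_right_cancel₀ h1 h2
          have : (y:ℂ) = ((a*x+c)/(b*x+d) : ℝ) := by
            rw [hval]; rw [mul_div_assoc, div_self (by exact_mod_cast hden'), mul_one]
          rw [this]; norm_cast
    · refine Or.inr ⟨?_, hw⟩
      by_cases hb : b = 0
      · exact Or.inl (by exact_mod_cast hb)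
      · exact Or.inr ⟨d/b, by push_cast; rw [mul_comm, div_mul_eq_mul_div, mul_div_assoc,
          div_self (by exact_mod_cast hb : (b:ℂ) ≠ 0), mul_one]⟩

lemma coeffs_zero (α β γ δ : ℂ) (hdet : α*δ - γ*β = 1)
    (him : ∀ x : ℝ, β*(x:ℂ) + δ ≠ 0 → ((α*(x:ℂ)+γ) * conj (β*(x:ℂ)+δ)).im = 0) :
    (α * conj β).im = 0 ∧ (α * conj δ + γ * conj β).im = 0 ∧ (γ * conj δ).im = 0 := by
  set a := (α * conj β).im
  set b := (α * conj δ + γ * conj β).im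
  set c := (γ * conj δ).im
  have key : ∀ x : ℝ, β*(x:ℂ) + δ ≠ 0 → a*x^2 + b*x + c = 0 := by
    intro x hx
    have hexp : (α*(x:ℂ)+γ) * conj (β*(x:ℂ)+δ)
        = (α * conj β)*(x:ℂ)^2 + (α * conj δ + γ * conj β)*(x:ℂ) + γ * conj δ := by
      simp only [map_add, map_mul, conj_ofReal]
      ring
    have := him x hx
    rw [hexp] at this
    simpa [Complex.add_im, Complex.mul_im, Complex.ofReal_re, Complex.ofReal_im,
      pow_two, a, b, c] using this
  have hdense : Dense {x : ℝ | β*(x:ℂ) + δ ≠ 0} := by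
    by_cases hb : β = 0
    · have hd : δ ≠ 0 := by
        intro hd0; rw [hb, hd0] at hdet; simp at hdet
      have : {x : ℝ | β*(x:ℂ) + δ ≠ 0} = Set.univ := by
        ext x; simp [hb, hd]
      rw [this]; exact dense_univ
    · rcases em (∃ x0 : ℝ, β*(x0:ℂ) + δ = 0) with ⟨x0, hx0⟩ | hno
      · have : {x : ℝ | β*(x:ℂ) + δ ≠ 0} = {x0}ᶜ := by
          ext x
          simp only [Set.mem_setOf_eq, Set.mem_compl_iff, Set.mem_singleton_iff]
          constructor
          · intro h hx; exact h (by rw [hx]; exact hx0)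
          · intro h hzero
            apply h
            have : β * ((x:ℂ) - (x0:ℂ)) = 0 := by
              rw [mul_sub]; rw [sub_eq_zero]
              linear_combination hzero - hx0
            rcases mul_eq_zero.mp this with h' | h'
            · exact absurd h' hb
            · exact_mod_cast sub_eq_zero.mp h'
        rw [this]; exact dense_compl_singleton x0
      · have : {x : ℝ | β*(x:ℂ) + δ ≠ 0} = Set.univ := by
          ext x; simp only [Set.mem_setOf_eq, Set.mem_univ, iff_true]
          exact fun h => hno ⟨x, h⟩
        rw [this]; exact dense_univ
  have hg : (fun x : ℝ => a*x^2+b*x+c) = (fun _ => 0) := by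
    apply Continuous.ext_on hdense (by continuity) continuous_const
    intro x hx; exact key x hx
  have h0 := congrFun hg 0
  have h1 := congrFun hg 1
  have h2 := congrFun hg (-1)
  norm_num at h0 h1 h2
  refine ⟨by linarith, by linarith, by linarith⟩

lemma real_ratio (z β : ℂ) (hβ : β ≠ 0) (h : (z * conj β).im = 0) :
    ∃ r : ℝ, z = (r:ℝ) * β := by
  refine ⟨(z * conj β).re / Complex.normSq β, ?_⟩
  have hnsq : (Complex.normSq β : ℝ) ≠ 0 := by simpa using hβ
  have h1 : z * conj β = (((z * conj β).re : ℝ) : ℂ) := by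
    apply Complex.ext <;> simp [h]
  rw [Complex.ofReal_div, div_mul_eq_mul_div, eq_div_iff (by exact_mod_cast hnsq)]
  calc z * ((Complex.normSq β : ℝ):ℂ) = z * (β * conj β) := by rw [Complex.mul_conj]
    _ = (z * conj β) * β := by ring
    _ = _ := by rw [← h1]

lemma real_or_imag (α β γ δ : ℂ) (hdet : α*δ - γ*β = 1)
    (hab : (α * conj β).im = 0) (hbb : (α * conj δ + γ * conj β).im = 0)
    (hcc : (γ * conj δ).im = 0) (hinf : β = 0 ∨ ∃ s : ℝ, δ = β*(s:ℂ)) :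
    (α.im = 0 ∧ β.im = 0 ∧ γ.im = 0 ∧ δ.im = 0) ∨
    (α.re = 0 ∧ β.re = 0 ∧ γ.re = 0 ∧ δ.re = 0) := by
  by_cases hβ : β = 0
  · have hαδ : α * δ = 1 := by rw [hβ] at hdet; linear_combination hdet
    have e1 : α.re * δ.im + α.im * δ.re = 0 := by
      have := congrArg Complex.im hαδ
      simpa [Complex.mul_im] using this
    have e3 : α.re * δ.re - α.im * δ.im = 1 := by
      have := congrArg Complex.re hαδ
      simpa [Complex.mul_re] using this
    have e2 : -(α.re * δ.im) + α.im * δ.re = 0 := by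
      have := hbb
      rw [hβ] at this
      simpa [Complex.mul_im, Complex.conj_re, Complex.conj_im] using this
    have e4 : -(γ.re * δ.im) + γ.im * δ.re = 0 := by
      simpa [Complex.mul_im, Complex.conj_re, Complex.conj_im] using hcc
    have hre0 : α.im * δ.re = 0 := by linarith
    have him0 : α.re * δ.im = 0 := by linarith
    by_cases him : δ.im = 0
    · left
      have hδre : δ.re ≠ 0 := by intro h; rw [him, h] at e3; simp at e3
      have hαim : α.im = 0 := by
        rcases mul_eq_zero.mp hre0 with h | h
        · exact h
        · exact absurd h hδre
      have hγim : γ.im = 0 := by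
        rw [him] at e4
        rcases mul_eq_zero.mp (by linarith : γ.im * δ.re = 0) with h | h
        · exact h
        · exact absurd h hδre
      exact ⟨hαim, by rw [hβ]; rfl, hγim, him⟩
    · right
      have hαre : α.re = 0 := by
        rcases mul_eq_zero.mp him0 with h | h
        · exact h
        · exact absurd h him
      have hαim : α.im ≠ 0 := by
        intro h; rw [hαre, h] at e3; simp at e3
      have hδre : δ.re = 0 := by
        rcases mul_eq_zero.mp hre0 with h | h
        · exact absurd h hαim
        · exact h
      have hγre : γ.re = 0 := by
        rw [hδre] at e4
        rcases mul_eq_zero.mp (by linarith : γ.re * δ.im = 0) with h | h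
        · exact h
        · exact absurd h him
      exact ⟨hαre, by rw [hβ]; rfl, hγre, hδre⟩
  · obtain ⟨s, hδ⟩ := hinf.resolve_left hβ
    have hnsq : Complex.normSq β ≠ 0 := by simpa using hβ
    obtain ⟨r, hα⟩ := real_ratio α β hβ hab
    have hgb : (γ * conj β).im = 0 := by
      have had : α * conj δ = (((r * s * Complex.normSq β : ℝ)):ℂ) := by
        rw [hα, hδ, map_mul, Complex.conj_ofReal]
        push_cast
        rw [show (r:ℂ) * β * ((conj β) * (s:ℂ)) = (r:ℂ)*(s:ℂ)*(β * conj β) by ring,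
          Complex.mul_conj]
      rw [had] at hbb
      simpa using hbb
    obtain ⟨t, hγ⟩ := real_ratio γ β hβ hgb
    have hβ2 : ((r*s - t : ℝ) : ℂ) * β^2 = 1 := by
      rw [hα, hγ] at hdet
      rw [hδ] at hdet
      push_cast
      linear_combination hdet
    have hcoef : (r*s - t : ℝ) ≠ 0 := by
      intro h; rw [h] at hβ2; simp at hβ2
    have hβ2im : (β^2).im = 0 := by
      have := congrArg Complex.im hβ2
      simp [Complex.mul_im] at this
      rcases this with h | h
      · exact absurd h hcoef
      · exact h
    have hprod : β.re * β.im = 0 := by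
      have : (β^2).im = 2 * (β.re * β.im) := by
        simp [pow_two, Complex.mul_im]; ring
      rw [this] at hβ2im; linarith
    rcases mul_eq_zero.mp hprod with h | h
    · right
      refine ⟨?_, h, ?_, ?_⟩
      · rw [hα]; simp [Complex.mul_re, h]
      · rw [hγ]; simp [Complex.mul_re, h]
      · rw [hδ]; simp [Complex.mul_re, h]
    · left
      refine ⟨?_, h, ?_, ?_⟩
      · rw [hα]; simp [Complex.mul_im, h]
      · rw [hγ]; simp [Complex.mul_im, h]
      · rw [hδ]; simp [Complex.mul_im, h]

lemma core_fwd (A B C D : ℂ) (hdet : A*D - C*B = 1) (h : mobius A B C D = rhat) :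
    (A.im = 0 ∧ B.im = 0 ∧ C.im = 0 ∧ D.im = 0) ∨
    (A.re = 0 ∧ B.re = 0 ∧ C.re = 0 ∧ D.re = 0) := by
  have him : ∀ x : ℝ, B*(x:ℂ) + D ≠ 0 → ((A*(x:ℂ)+C) * conj (B*(x:ℂ)+D)).im = 0 := by
    intro x hx
    have hmem : (((A*(x:ℂ)+C)/(B*(x:ℂ)+D) : ℂ) : OnePoint ℂ) ∈ rhat := by
      rw [← h]
      exact Or.inl ⟨_, Or.inl ⟨x, hx, rfl⟩, rfl⟩
    rcases hmem with ⟨y, hy⟩ | hy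
    · have hzy : (A*(x:ℂ)+C)/(B*(x:ℂ)+D) = (y:ℂ) := (OnePoint.coe_eq_coe).mp hy
      have hq : A*(x:ℂ)+C = (y:ℂ) * (B*(x:ℂ)+D) := by
        rw [← hzy, div_mul_cancel₀ _ hx]
      rw [hq, mul_assoc, Complex.mul_conj]
      simp
    · exact absurd hy (OnePoint.coe_ne_infty _)
  have hinf : B = 0 ∨ ∃ s : ℝ, D = B * (s:ℂ) := by
    have hmem : (∞ : OnePoint ℂ) ∈ mobius A B C D := by
      rw [h]; exact Or.inr rfl
    rcases hmem with ⟨z, _, hz⟩ | ⟨hcond, _⟩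
    · exact absurd hz.symm (OnePoint.coe_ne_infty z)
    · exact hcond
  obtain ⟨c1, c2, c3⟩ := coeffs_zero A B C D hdet him
  exact real_or_imag A B C D hdet c1 c2 c3 hinf

lemma rat_int (q : ℚ) (h : IsIntegral ℤ ((q:ℂ))) : ∃ n : ℤ, ((n:ℚ)) = q := by
  have h' : IsIntegral ℤ (q:ℚ) := by
    rw [← isIntegral_algebraMap_iff (A := ℚ) (B := ℂ) (algebraMap ℚ ℂ).injective]
    have : algebraMap ℚ ℂ q = (q:ℂ) := by norm_cast
    rw [this]; exact h
  exact IsIntegrallyClosed.isIntegral_iff.mp h'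

lemma int_I : IsIntegral ℤ Complex.I := by
  refine ⟨Polynomial.X^2 + 1, ?_, ?_⟩
  · apply Polynomial.monic_X_pow_add
    simp
  · simp [Polynomial.eval₂_add, Complex.I_sq]

lemma classify (z : ℂ) (hz : IsIntegral ℤ z) (a b : ℚ) (hab : z = (a:ℂ) + (b:ℂ)*Complex.I) :
    (z.im = 0 → ∃ n : ℤ, z = (n:ℂ)) ∧ (z.re = 0 → ∃ n : ℤ, z = Complex.I * (n:ℂ)) := by
  constructor
  · intro him
    have hb : (b:ℝ) = 0 := by
      have : z.im = (b:ℝ) := by rw [hab]; simp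
      linarith [this ▸ him]
    have hz' : z = (a:ℂ) := by
      rw [hab, show (b:ℂ) = 0 by exact_mod_cast hb]; ring
    obtain ⟨n, hn⟩ := rat_int a (hz' ▸ hz)
    exact ⟨n, by rw [hz', ← hn]; norm_cast⟩
  · intro hre
    have ha : (a:ℝ) = 0 := by
      have : z.re = (a:ℝ) := by rw [hab]; simp
      linarith [this ▸ hre]
    have hz' : z = (b:ℂ) * Complex.I := by
      rw [hab, show (a:ℂ) = 0 by exact_mod_cast ha]; ring
    have hbI : ((b:ℚ):ℂ) = z * (-Complex.I) := by
      rw [hz']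
      have h2 : Complex.I * Complex.I = -1 := Complex.I_mul_I
      linear_combination (b:ℂ) * h2
    have hbint : IsIntegral ℤ ((b:ℚ):ℂ) := by
      rw [hbI]; exact hz.mul int_I.neg
    obtain ⟨n, hn⟩ := rat_int b hbint
    refine ⟨n, by rw [hz', ← hn]; push_cast; ring⟩

/-- If `K = ℚ(i)` (i.e. `i` lies in the image of the quadratic field `K`
in `ℂ`, so `O_K = ℤ[i]`), then for `M ∈ SL₂(O_K)` the Möbius image `M(ℝ̂)` equals `ℝ̂`
iff all four entries of `M` lie in `ℤ`, or all four entries of `M` lie in `iℤ`. -/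
theorem stmt3 (K : Type) [Field K] [NumberField K]
    (hdeg : Module.finrank ℚ K = 2) (hdisc : NumberField.discr K < 0)
    (ι : K →+* ℂ) (hKi : ∃ x : K, ι x = Complex.I)
    (M : Matrix.SpecialLinearGroup (Fin 2) (RingOfIntegers K)) :
    bianchiCircle K ι M = rhat ↔
      ((∀ i j : Fin 2, ∃ n : ℤ, emb K ι (M.1 i j) = (n : ℂ)) ∨
       (∀ i j : Fin 2, ∃ n : ℤ, emb K ι (M.1 i j) = Complex.I * (n : ℂ))) := by
  obtain ⟨x0, hx0⟩ := hKi
  have hdecomp : ∀ z : K, ∃ a b : ℚ, ι z = (a:ℂ) + (b:ℂ) * Complex.I := by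
    have hli : LinearIndependent ℚ ![(1:K), x0] := by
      rw [LinearIndependent.pair_iff]
      intro s t hst
      have h1 := congrArg ι hst
      rw [map_add, Rat.smul_def, Rat.smul_def, map_mul, map_mul, map_ratCast, map_ratCast,
        map_one, mul_one, hx0, map_zero] at h1
      rw [Complex.ext_iff] at h1
      simp at h1
      obtain ⟨hs, ht⟩ := h1
      exact ⟨by exact_mod_cast hs, by exact_mod_cast ht⟩
    let B := basisOfLinearIndependentOfCardEqFinrank hli (by simp [hdeg])
    have hBcoe : ⇑B = ![(1:K), x0] := coe_basisOfLinearIndependentOfCardEqFinrank hli _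
    intro z
    refine ⟨B.repr z 0, B.repr z 1, ?_⟩
    have hsum := B.sum_repr z
    rw [Fin.sum_univ_two, hBcoe] at hsum
    simp only [Matrix.cons_val_zero, Matrix.cons_val_one, Matrix.head_cons] at hsum
    have h2 := congrArg ι hsum.symm
    rw [map_add, Rat.smul_def, Rat.smul_def, map_mul, map_mul, map_ratCast, map_ratCast,
      map_one, mul_one, hx0] at h2
    exact h2
  have hint : ∀ i j : Fin 2, IsIntegral ℤ (emb K ι (M.1 i j)) := by
    intro i j
    exact IsIntegral.map ι.toIntAlgHom (RingOfIntegers.isIntegral_coe (M.1 i j))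
  have hcl : ∀ i j : Fin 2,
      ((emb K ι (M.1 i j)).im = 0 → ∃ n : ℤ, emb K ι (M.1 i j) = (n:ℂ)) ∧
      ((emb K ι (M.1 i j)).re = 0 → ∃ n : ℤ, emb K ι (M.1 i j) = Complex.I * (n:ℂ)) := by
    intro i j
    obtain ⟨a, b, hab⟩ := hdecomp (algebraMap (RingOfIntegers K) K (M.1 i j))
    exact classify _ (hint i j) a b hab
  have hdet : emb K ι (M.1 0 0) * emb K ι (M.1 1 1)
      - emb K ι (M.1 0 1) * emb K ι (M.1 1 0) = 1 := by
    have h1 : M.1 0 0 * M.1 1 1 - M.1 0 1 * M.1 1 0 = 1 := by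
      rw [← Matrix.det_fin_two]; exact M.2
    have h2 := congrArg (fun x => ι (algebraMap (RingOfIntegers K) K x)) h1
    simp only [map_sub, map_mul, map_one] at h2
    exact h2
  constructor
  · intro h
    have h' : mobius (emb K ι (M.1 0 0)) (emb K ι (M.1 1 0)) (emb K ι (M.1 0 1))
        (emb K ι (M.1 1 1)) = rhat := h
    rcases core_fwd _ _ _ _ hdet h' with ⟨h1, h2, h3, h4⟩ | ⟨h1, h2, h3, h4⟩
    · left
      intro i j
      fin_cases i <;> fin_cases j
      · exact (hcl 0 0).1 h1
      · exact (hcl 0 1).1 h3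
      · exact (hcl 1 0).1 h2
      · exact (hcl 1 1).1 h4
    · right
      intro i j
      fin_cases i <;> fin_cases j
      · exact (hcl 0 0).2 h1
      · exact (hcl 0 1).2 h3
      · exact (hcl 1 0).2 h2
      · exact (hcl 1 1).2 h4
  · rintro (hZ | hiZ)
    · obtain ⟨n00, h00⟩ := hZ 0 0
      obtain ⟨n10, h10⟩ := hZ 1 0
      obtain ⟨n01, h01⟩ := hZ 0 1
      obtain ⟨n11, h11⟩ := hZ 1 1
      rw [h00, h10, h01, h11] at hdet
      have hd : (n00 * n11 - n01 * n10 : ℤ) = 1 := by exact_mod_cast hdet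
      show mobius (emb K ι (M.1 0 0)) (emb K ι (M.1 1 0)) (emb K ι (M.1 0 1))
        (emb K ι (M.1 1 1)) = rhat
      rw [h00, h10, h01, h11]
      have hne : (n00:ℝ) * (n11:ℝ) - (n01:ℝ) * (n10:ℝ) ≠ 0 := by
        have : ((n00 * n11 - n01 * n10 : ℤ) : ℝ) = 1 := by exact_mod_cast hd
        push_cast at this
        rw [this]; norm_num
      have := mobius_real (n00:ℝ) (n10:ℝ) (n01:ℝ) (n11:ℝ) hne
      push_cast at this ⊢
      exact this
    · obtain ⟨n00, h00⟩ := hiZ 0 0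
      obtain ⟨n10, h10⟩ := hiZ 1 0
      obtain ⟨n01, h01⟩ := hiZ 0 1
      obtain ⟨n11, h11⟩ := hiZ 1 1
      rw [h00, h10, h01, h11] at hdet
      have hdC : ((n00 * n11 - n01 * n10 : ℤ) : ℂ) = -1 := by
        push_cast
        linear_combination (-1:ℂ) * hdet
          + ((n00:ℂ)*(n11:ℂ) - (n01:ℂ)*(n10:ℂ)) * Complex.I_mul_I
      have hd : (n00 * n11 - n01 * n10 : ℤ) = -1 := by exact_mod_cast hdC
      show mobius (emb K ι (M.1 0 0)) (emb K ι (M.1 1 0)) (emb K ι (M.1 0 1))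
        (emb K ι (M.1 1 1)) = rhat
      rw [h00, h10, h01, h11, mobius_scale Complex.I _ _ _ _ Complex.I_ne_zero]
      have hne : (n00:ℝ) * (n11:ℝ) - (n01:ℝ) * (n10:ℝ) ≠ 0 := by
        have : ((n00 * n11 - n01 * n10 : ℤ) : ℝ) = -1 := by exact_mod_cast hd
        push_cast at this
        rw [this]; norm_num
      have := mobius_real (n00:ℝ) (n10:ℝ) (n01:ℝ) (n11:ℝ) hne
      push_cast at this ⊢
      exact this
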